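/- arXiv:2005.03102 — 3 statements merged into one kernel-verified Lean document; each statement's English description precedes it below -/
import Mathlib

section
/- Let Σ be a finite alphabet of size σ ≥ 2 and let k ≥ 1. Then the asymptotic rate of the (σ^k,k)-constrained de Bruijn codes is zero: the quantity (log_σ |C_DB(n, σ^k, k)|)/n tends to 0 as n → ∞. -/
/-- The window `s[i, i+k-1]` (0-based start `i`, length `k`). -/
def window {A : Type*} (s : List A) (i k : ℕ) : List A := (s.drop i).take k

/-- `s` is a `(b,k)`-constrained de Bruijn sequence: any two windows of length `k`
starting at distinct positions at distance at most `b-1` are distinct. -/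
def IsCDB {A : Type*} (s : List A) (b k : ℕ) : Prop :=
  ∀ i j : ℕ, i < j → j - i ≤ b - 1 → j + k ≤ s.length → window s i k ≠ window s j k

lemma window_length {A : Type*} {s : List A} {p k : ℕ} (h : p + k ≤ s.length) :
    (window s p k).length = k := by
  simp only [window, List.length_take, List.length_drop]
  omega

lemma window_take {A : Type*} (s : List A) (p k m : ℕ) (hpk : p + k ≤ m) :
    window (s.take m) p k = window s p k := by
  simp only [window, List.drop_take, List.take_take]
  congr 1
  omega

/-- Key determinism lemma: a `(σ^k, k)`-constrained de Bruijn sequence is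
determined by its first `σ^k + k - 1` symbols (and its length). -/
lemma take_det {A : Type*} [Fintype A] (hA : 2 ≤ Fintype.card A) (k : ℕ) (hk : 1 ≤ k)
    {s t : List A} (hlen : s.length = t.length)
    (hs : IsCDB s (Fintype.card A ^ k) k) (ht : IsCDB t (Fintype.card A ^ k) k)
    (h : s.take (Fintype.card A ^ k + k - 1) = t.take (Fintype.card A ^ k + k - 1)) :
    s = t := by
  set b := Fintype.card A ^ k with hb
  have hb2 : 2 ≤ b := le_trans hA (Nat.le_self_pow (by omega) _)
  have main : ∀ m, s.take m = t.take m := by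
    intro m
    induction m with
    | zero => simp
    | succ m ih =>
      rw [List.take_succ, List.take_succ, ih]
      suffices hopt : s[m]? = t[m]? by rw [hopt]
      by_cases hm1 : m + 1 ≤ b + k - 1
      · have h' := congrArg (fun l => l[m]?) h
        simpa [List.getElem?_take, (by omega : m < b + k - 1)] using h'
      · by_cases hm2 : s.length ≤ m
        · rw [List.getElem?_eq_none hm2, List.getElem?_eq_none (by omega)]
        push_neg at hm2
        have hms : m < s.length := hm2
        have hmt : m < t.length := by omega
        have hkm : k ≤ m + 1 := by omega
        set j := m + 1 - k with hj
        have hjk : j + k = m + 1 := by omega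
        have hbj : b ≤ j := by omega
        have hwl : ∀ (u : List A) (r : ℕ), r < b → m < u.length →
            (window u (j - r) k).length = k := by
          intro u r hr hu
          exact window_length (by omega)
        set F : Fin b → List.Vector A k :=
          fun r => ⟨window s (j - r.val) k, hwl s r.val r.2 hms⟩ with hF
        set G : Fin b → List.Vector A k :=
          fun r => ⟨window t (j - r.val) k, hwl t r.val r.2 hmt⟩ with hG
        have hinj : ∀ (u : List A), IsCDB u b k → m < u.length →
            ∀ r r' : Fin b, window u (j - r.val) k = window u (j - r'.val) k → r = r' := by
          intro u hu hum r r' hrr'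
          by_contra hne
          have hne' : r.val ≠ r'.val := fun hv => hne (Fin.ext hv)
          rcases Nat.lt_or_ge r.val r'.val with hlt | hge
          · exact hu (j - r'.val) (j - r.val) (by omega) (by omega) (by omega) hrr'.symm
          · have hlt : r'.val < r.val := by omega
            exact hu (j - r.val) (j - r'.val) (by omega) (by omega) (by omega) hrr'
        have Finj : Function.Injective F := by
          intro r r' h'
          exact hinj s hs hms r r' (congrArg Subtype.val h')
        have Ginj : Function.Injective G := by
          intro r r' h'
          exact hinj t ht hmt r r' (congrArg Subtype.val h')
        have Fbij : Function.Bijective F :=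
          (Fintype.bijective_iff_injective_and_card F).mpr
            ⟨Finj, by simp [card_vector, hb]⟩
        have hFG : ∀ r : Fin b, r.val ≠ 0 → F r = G r := by
          intro r hr
          apply Subtype.ext
          show window s (j - r.val) k = window t (j - r.val) k
          rw [← window_take s (j - r.val) k m (by omega),
            ← window_take t (j - r.val) k m (by omega), ih]
        have hzero : (0 : ℕ) < b := by omega
        have h00 : F ⟨0, hzero⟩ = G ⟨0, hzero⟩ := by
          obtain ⟨r, hr⟩ := Fbij.surjective (G ⟨0, hzero⟩)
          rcases Nat.eq_zero_or_pos r.val with h0 | hpos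
          · have : r = ⟨0, hzero⟩ := Fin.ext h0
            rw [this] at hr
            exact hr
          · exfalso
            rw [hFG r (by omega)] at hr
            have hv := congrArg Fin.val (Ginj hr)
            simp at hv
            omega
        have hw : window s j k = window t j k := by
          have := congrArg Subtype.val h00
          simpa [hF, hG] using this
        have hk1 : k - 1 < (window s j k).length := by
          rw [window_length (by omega)]; omega
        have hk1' : k - 1 < (window t j k).length := by
          rw [window_length (by omega)]; omega
        have hidx : j + (k - 1) = m := by omega
        have hgs : s[m]'hms = (window s j k)[k - 1]'hk1 := by
          simp only [window, List.getElem_take, List.getElem_drop, hidx]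
        have hgt : t[m]'hmt = (window t j k)[k - 1]'hk1' := by
          simp only [window, List.getElem_take, List.getElem_drop, hidx]
        have hst : s[m]'hms = t[m]'hmt := by
          rw [hgs, hgt]
          exact List.getElem_of_eq hw _
        rw [List.getElem?_eq_getElem hms, List.getElem?_eq_getElem hmt, hst]
  calc s = s.take s.length := List.take_length.symm
    _ = t.take s.length := main s.length
    _ = t := by rw [hlen, List.take_length]

theorem stmt5 {A : Type*} [Fintype A] (hA : 2 ≤ Fintype.card A) (k : ℕ) (hk : 1 ≤ k) :
    Filter.Tendsto
      (fun n : ℕ =>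
        Real.logb (Fintype.card A)
          (({s : List A | s.length = n ∧ IsCDB s (Fintype.card A ^ k) k}.ncard : ℝ)) / (n : ℝ))
      Filter.atTop (nhds 0) := by
  classical
  set B := Fintype.card A ^ k + k - 1 with hB
  set D := {l : List A | l.length ≤ B} with hD
  have hDfin : D.Finite := List.finite_length_le A B
  have bound : ∀ n : ℕ,
      ({s : List A | s.length = n ∧ IsCDB s (Fintype.card A ^ k) k}).ncard ≤ D.ncard := by
    intro n
    refine Set.ncard_le_ncard_of_injOn (fun s => s.take B) ?_ ?_ hDfin
    · intro a _
      simp only [hD, Set.mem_setOf_eq, List.length_take]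
      omega
    · intro x hx y hy hxy
      exact take_det hA k hk (hx.1.trans hy.1.symm) hx.2 hy.2 hxy
  have hσ1 : (1 : ℝ) < (Fintype.card A : ℝ) := by
    have : (2 : ℝ) ≤ (Fintype.card A : ℝ) := by exact_mod_cast hA
    linarith
  have hD1 : 1 ≤ D.ncard := by
    have : D.Nonempty := ⟨[], by simp [hD]⟩
    have := (Set.ncard_pos hDfin).mpr this
    omega
  set c := Real.logb (Fintype.card A) (D.ncard : ℝ) with hc
  have hc0 : 0 ≤ c := Real.logb_nonneg hσ1 (by exact_mod_cast hD1)
  apply tendsto_of_tendsto_of_tendsto_of_le_of_le' tendsto_const_nhds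
    (tendsto_const_div_atTop_nhds_zero_nat c)
  · filter_upwards [Filter.eventually_gt_atTop 0] with n hn
    apply div_nonneg _ (Nat.cast_nonneg n)
    rcases Nat.eq_zero_or_pos
        ({s : List A | s.length = n ∧ IsCDB s (Fintype.card A ^ k) k}).ncard with h0 | hpos
    · rw [h0]; simp
    · exact Real.logb_nonneg hσ1 (by exact_mod_cast hpos)
  · filter_upwards [Filter.eventually_gt_atTop 0] with n hn
    have hn' : (0 : ℝ) < (n : ℝ) := by exact_mod_cast hn
    rw [div_le_div_iff_of_pos_right hn']
    rcases Nat.eq_zero_or_pos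
        ({s : List A | s.length = n ∧ IsCDB s (Fintype.card A ^ k) k}).ncard with h0 | hpos
    · rw [h0]; simpa using hc0
    · rw [hc]
      refine (Real.logb_le_logb hσ1 (by exact_mod_cast hpos)
        (by exact_mod_cast lt_of_lt_of_le hpos (bound n))).mpr ?_
      exact_mod_cast bound n
end

section
/- Let k ≥ 2 and let F_2 = {0^k, 1^{k+1}} over the binary alphabet. Let A_0(n;F_2) (respectively A_1(n;F_2)) be the set of binary words of length n that avoid F_2 and start with 0 (respectively with 1). Then for all n ≥ k+1, |A_1(n;F_2)| = Σ_{i=1}^{k} |A_0(n−i;F_2)|. -/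
/-- `s` avoids every pattern in `F`. -/
def Avoids {A : Type*} (s : List A) (F : Set (List A)) : Prop :=
  ∀ t ∈ F, ¬ t <:+: s

/-- `F_2 = {0^k, 1^{k+1}}`. -/
def F2 (k : ℕ) : Set (List (ZMod 2)) :=
  {List.replicate k (0 : ZMod 2), List.replicate (k + 1) (1 : ZMod 2)}

open List

private lemma zmod2_cases (x : ZMod 2) : x = 0 ∨ x = 1 := by
  revert x; decide

/-- prefix of `1^j ++ t` with `t` starting with `0` : at most `j` ones -/
private lemma lemP : ∀ (m j : ℕ) (t : List (ZMod 2)), t.head? = some 0 →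
    replicate m (1 : ZMod 2) <+: replicate j (1 : ZMod 2) ++ t → m ≤ j := by
  intro m
  induction m with
  | zero => intro _ _ _ _; exact Nat.zero_le _
  | succ m ih =>
    intro j t ht h
    match j with
    | 0 =>
      simp only [replicate_zero, nil_append] at h
      match t, ht with
      | (0 : ZMod 2) :: t', _ =>
        rw [replicate_succ] at h
        rcases cons_prefix_cons.1 h with ⟨h1, _⟩
        exact absurd h1 (by decide)
    | j + 1 =>
      rw [replicate_succ, replicate_succ, cons_append] at h
      rcases cons_prefix_cons.1 h with ⟨_, h2⟩
      exact Nat.succ_le_succ (ih j t ht h2)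

/-- `0^m` infix of `1^i ++ t` with `m ≥ 1` forces infix of `t`. -/
private lemma lemB : ∀ (i m : ℕ) (t : List (ZMod 2)), 1 ≤ m →
    replicate m (0 : ZMod 2) <:+: replicate i (1 : ZMod 2) ++ t →
    replicate m (0 : ZMod 2) <:+: t := by
  intro i
  induction i with
  | zero => intro m t _ h; simpa using h
  | succ i ih =>
    intro m t hm h
    rw [replicate_succ, cons_append, infix_cons_iff] at h
    rcases h with h | h
    · match m, hm with
      | m + 1, _ =>
        rw [replicate_succ] at h
        rcases cons_prefix_cons.1 h with ⟨h1, _⟩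
        exact absurd h1 (by decide)
    · exact ih m t hm h

/-- `1^m` infix of `1^i ++ t`, `t` starts with `0`, `i < m` forces infix of `t`. -/
private lemma lemC : ∀ (i m : ℕ) (t : List (ZMod 2)), t.head? = some 0 → i < m →
    replicate m (1 : ZMod 2) <:+: replicate i (1 : ZMod 2) ++ t →
    replicate m (1 : ZMod 2) <:+: t := by
  intro i
  induction i with
  | zero => intro m t _ _ h; simpa using h
  | succ i ih =>
    intro m t ht him h
    rw [replicate_succ, cons_append, infix_cons_iff] at h
    rcases h with h | h
    · rw [← cons_append, ← replicate_succ] at h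
      exact absurd (lemP m (i + 1) t ht h) (Nat.not_le.2 him)
    · exact ih m t ht (Nat.lt_of_succ_lt him) h

private lemma ncard_biUnion {α ι : Type*} [DecidableEq ι] (s : Finset ι) (f : ι → Set α)
    (hf : ∀ i ∈ s, (f i).Finite)
    (hd : ∀ i ∈ s, ∀ j ∈ s, i ≠ j → Disjoint (f i) (f j)) :
    (⋃ i ∈ s, f i).ncard = ∑ i ∈ s, (f i).ncard := by
  induction s using Finset.induction with
  | empty => simp
  | @insert a s ha ih =>
    rw [Finset.sum_insert ha]
    have h1 : (⋃ i ∈ insert a s, f i) = f a ∪ ⋃ i ∈ s, f i := by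
      simp [Set.biUnion_insert]
    have hdisj : Disjoint (f a) (⋃ i ∈ s, f i) := by
      refine Set.disjoint_iUnion₂_right.2 fun i hi => ?_
      exact hd a (Finset.mem_insert_self a s) i (Finset.mem_insert_of_mem hi)
        (fun h => ha (h ▸ hi))
    have hfa : (f a).Finite := hf a (Finset.mem_insert_self a s)
    have hfU : (⋃ i ∈ s, f i).Finite := Set.Finite.biUnion (Finset.finite_toSet s)
        (fun i hi => hf i (Finset.mem_insert_of_mem hi))
    rw [h1, Set.ncard_union_eq hdisj hfa hfU,
      ih (fun i hi => hf i (Finset.mem_insert_of_mem hi))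
        (fun i hi j hj hij => hd i (Finset.mem_insert_of_mem hi) j
          (Finset.mem_insert_of_mem hj) hij)]

theorem stmt11 (k n : ℕ) (hk : 2 ≤ k) (hn : k + 1 ≤ n) :
    {s : List (ZMod 2) | s.length = n ∧ Avoids s (F2 k) ∧ s.head? = some 1}.ncard
      = ∑ i ∈ Finset.Icc 1 k,
          {s : List (ZMod 2) | s.length = n - i ∧ Avoids s (F2 k) ∧ s.head? = some 0}.ncard := by
  set T : ℕ → Set (List (ZMod 2)) :=
    fun i => {s : List (ZMod 2) | s.length = n - i ∧ Avoids s (F2 k) ∧ s.head? = some 0} with hT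
  set g : ℕ → List (ZMod 2) → List (ZMod 2) := fun i t => replicate i (1 : ZMod 2) ++ t with hg
  have hginj : ∀ i, Function.Injective (g i) := fun i t t' h => List.append_cancel_left h
  -- the key set equality
  have key : {s : List (ZMod 2) | s.length = n ∧ Avoids s (F2 k) ∧ s.head? = some 1}
      = ⋃ i ∈ Finset.Icc 1 k, g i '' T i := by
    ext s
    simp only [Set.mem_setOf_eq, Set.mem_iUnion, Set.mem_image, Finset.mem_Icc]
    constructor
    · rintro ⟨hlen, hav, hhead⟩
      set x := s.takeWhile (· = (1 : ZMod 2)) with hx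
      set t := s.dropWhile (· = (1 : ZMod 2)) with ht
      have hsplit : x ++ t = s := takeWhile_append_dropWhile
      have hxrep : x = replicate x.length (1 : ZMod 2) := by
        refine (eq_replicate_iff.2 ⟨rfl, fun b hb => ?_⟩)
        have := mem_takeWhile_imp hb
        simpa using this
      have htne : t ≠ [] := by
        intro h
        rw [h, append_nil] at hsplit
        have hs : s = replicate n (1 : ZMod 2) := by
          have h2 : x.length = n := by rw [hsplit, hlen]
          rw [← hsplit, hxrep, h2]
        have : replicate (k + 1) (1 : ZMod 2) <:+: s := by
          rw [hs]
          exact List.IsPrefix.isInfix ⟨replicate (n - (k+1)) 1, by rw [← replicate_add,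
            Nat.add_sub_cancel' hn]⟩
        exact hav _ (Or.inr rfl) this
      have hthead : t.head? = some 0 := by
        have hb := List.head_dropWhile_not (fun x => decide (x = (1 : ZMod 2))) htne
        set b := t.head htne with hbdef
        have hb1 : b ≠ (1 : ZMod 2) := by simpa using hb
        have hb0 : b = 0 := (zmod2_cases b).resolve_right hb1
        rw [List.head?_eq_head htne]
        exact congrArg some hb0
      have hxpos : 1 ≤ x.length := by
        by_contra hc
        push_neg at hc
        have hx0 : x = [] := List.eq_nil_of_length_eq_zero (by omega)
        rw [hx0, nil_append] at hsplit
        rw [hsplit] at hthead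
        rw [hthead] at hhead
        exact absurd hhead (by decide)
      have hxk : x.length ≤ k := by
        by_contra hgt
        push_neg at hgt
        have : replicate (k + 1) (1 : ZMod 2) <:+: s := by
          refine List.IsPrefix.isInfix ?_
          calc replicate (k + 1) (1 : ZMod 2) <+: x := by
                rw [hxrep]
                exact ⟨replicate (x.length - (k+1)) 1, by rw [← replicate_add,
                  Nat.add_sub_cancel' hgt]⟩
            _ <+: s := hsplit ▸ prefix_append x t
        exact hav _ (Or.inr rfl) this
      refine ⟨x.length, ⟨hxpos, hxk⟩, t, ⟨?_, ?_, hthead⟩,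
        by show replicate x.length (1 : ZMod 2) ++ t = s; rw [← hxrep]; exact hsplit⟩
      · have : x.length + t.length = n := by rw [← hlen, ← hsplit, length_append]
        omega
      · intro p hp hinf
        exact hav p hp (hinf.trans (List.IsSuffix.isInfix (ht ▸ dropWhile_suffix _)))
    · rintro ⟨i, ⟨hi1, hik⟩, t, ⟨hlen, hav, hhead⟩, rfl⟩
      refine ⟨?_, ?_, ?_⟩
      · rw [hg]; simp only [length_append, length_replicate, hlen]; omega
      · intro p hp hinf
        rcases hp with h0 | h1
        · exact hav _ (Or.inl rfl) (h0 ▸ lemB i k t (by omega) (h0 ▸ hinf))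
        · exact hav _ (Or.inr rfl) (h1 ▸ lemC i (k+1) t hhead (by omega) (h1 ▸ hinf))
      · match i, hi1 with
        | i + 1, _ => rw [hg]; simp [replicate_succ]
  rw [key]
  rw [ncard_biUnion]
  · refine Finset.sum_congr rfl fun i _ => Set.ncard_image_of_injective _ (hginj i)
  · intro i hi
    exact Set.Finite.subset (List.finite_length_eq (ZMod 2) n)
      (by rintro s ⟨t, ⟨hlen, _, _⟩, rfl⟩
          simp only [Set.mem_setOf_eq, hg, length_append, length_replicate, hlen]
          simp only [Finset.mem_Icc] at hi
          omega)
  · intro i hi j hj hij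
    simp only [Finset.mem_Icc] at hi hj
    rw [Set.disjoint_left]
    rintro s ⟨t, ⟨_, _, hth⟩, rfl⟩ ⟨t', ⟨_, _, hth'⟩, heq⟩
    -- replicate j 1 ++ t' = replicate i 1 ++ t, i ≠ j
    rcases Nat.lt_or_ge i j with hlt | hge
    · have : replicate i (1 : ZMod 2) ++ (replicate (j - i) 1 ++ t') = replicate i 1 ++ t := by
        rw [← append_assoc, ← replicate_add, Nat.add_sub_cancel' (le_of_lt hlt)]
        exact heq
      have h2 := List.append_cancel_left this
      rw [← h2] at hth
      obtain ⟨c, hc⟩ := Nat.exists_eq_add_of_lt hlt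
      have hji : j - i = c + 1 := by omega
      rw [hji, replicate_succ, cons_append, head?_cons] at hth
      exact absurd hth (by decide)
    · have hlt' : j < i := by omega
      have : replicate j (1 : ZMod 2) ++ (replicate (i - j) 1 ++ t) = replicate j 1 ++ t' := by
        rw [← append_assoc, ← replicate_add, Nat.add_sub_cancel' (le_of_lt hlt')]
        exact heq.symm
      have h2 := List.append_cancel_left this
      rw [← h2] at hth'
      obtain ⟨c, hc⟩ := Nat.exists_eq_add_of_lt hlt'
      have hji : i - j = c + 1 := by omega
      rw [hji, replicate_succ, cons_append, head?_cons] at hth'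
      exact absurd hth' (by decide)
end

section
/- Let Σ be a finite alphabet, let b ≥ 2, and let s ∈ Σ^n be a (b,1)-constrained de Bruijn sequence. For Δ ⊆ {1,…,n}, let s(Δ) denote the word obtained from s by deleting the symbols in the positions of Δ (keeping the remaining symbols in order). Suppose Δ_1, Δ_2 ⊆ {1,…,n} each contain at most b−1 consecutive integers (i.e., neither contains a run {j, j+1, …, j+b−1} of b consecutive positions). If s(Δ_1) = s(Δ_2), then Δ_1 = Δ_2. -/
def erasePos {A : Type*} (s : List A) (Δ : Finset ℕ) : List A :=
  ((List.range s.length).filter (fun i => i ∉ Δ)).filterMap (fun i => s[i]?)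

lemma erasePos_split {A : Type*} (s : List A) (Δ : Finset ℕ) {m : ℕ} (hm : m ≤ s.length) :
    erasePos s Δ = ((List.range' 0 m).filter (fun i => i ∉ Δ)).filterMap (fun i => s[i]?)
      ++ ((List.range' m (s.length - m)).filter (fun i => i ∉ Δ)).filterMap (fun i => s[i]?) := by
  have h := List.range'_append_1 (s := 0) (m := m) (n := s.length - m)
  simp only [Nat.zero_add] at h
  have : List.range s.length = List.range' 0 m ++ List.range' m (s.length - m) :=
    calc List.range s.length = List.range' 0 (s.length - m + m) := by
          rw [List.range_eq_range']; congr 1; omega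
      _ = List.range' 0 m ++ List.range' m (s.length - m) := by rw [h, Nat.add_comm]
  rw [erasePos, this, List.filter_append, List.filterMap_append]

lemma window_one {A : Type*} (s : List A) {i : ℕ} (h : i < s.length) :
    window s i 1 = [s[i]] := by
  rw [window, List.drop_eq_getElem_cons h]
  rfl

lemma key {A : Type*} (b : ℕ) (s : List A) (hs : IsCDB s b 1)
    (Δ₁ Δ₂ : Finset ℕ) (h1 : Δ₁ ⊆ Finset.range s.length)
    (hr1 : ¬ ∃ j : ℕ, ∀ t : ℕ, t < b → j + t ∈ Δ₁)
    (heq : erasePos s Δ₁ = erasePos s Δ₂)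
    (m : ℕ) (hm1 : m ∈ Δ₁) (hm2 : m ∉ Δ₂)
    (hagree : ∀ i < m, (i ∈ Δ₁ ↔ i ∈ Δ₂)) : False := by
  have hmn : m < s.length := Finset.mem_range.mp (h1 hm1)
  -- least t with m + t ∉ Δ₁
  push_neg at hr1
  obtain ⟨t, htb, ht⟩ := hr1 m
  have hex : ∃ t, m + t ∉ Δ₁ := ⟨t, ht⟩
  set t₀ := Nat.find hex with ht₀def
  have ht₀ : m + t₀ ∉ Δ₁ := Nat.find_spec hex
  have ht₀le : t₀ ≤ t := Nat.find_min' hex ht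
  have ht₀b : t₀ < b := lt_of_le_of_lt ht₀le htb
  have ht₀pos : 0 < t₀ := by
    rcases Nat.eq_zero_or_pos t₀ with h | h
    · exact absurd (show m + t₀ ∈ Δ₁ by simpa [h] using hm1) ht₀
    · exact h
  have hbelow : ∀ t' < t₀, m + t' ∈ Δ₁ := fun t' h' => by
    by_contra hc; exact absurd (Nat.find_min hex h') (by simp [hc])
  -- split both erased words at position m
  rw [erasePos_split s Δ₁ hmn.le, erasePos_split s Δ₂ hmn.le] at heq
  have hpre : ((List.range' 0 m).filter (fun i => i ∉ Δ₁)) =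
      ((List.range' 0 m).filter (fun i => i ∉ Δ₂)) := by
    apply List.filter_congr
    intro a ha
    simp only [List.mem_range'_1] at ha
    have := hagree a (by omega)
    simp [this]
  rw [hpre] at heq
  have heqT : ((List.range' m (s.length - m)).filter (fun i => i ∉ Δ₁)).filterMap
        (fun i => s[i]?) =
      ((List.range' m (s.length - m)).filter (fun i => i ∉ Δ₂)).filterMap (fun i => s[i]?) :=
    List.append_cancel_left heq
  -- RHS starts with s[m]
  have hsm : s.length - m = (s.length - m - 1) + 1 := by omega
  have hT2 : ((List.range' m (s.length - m)).filter (fun i => i ∉ Δ₂)).filterMap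
      (fun i => s[i]?) = s[m] ::
      (((List.range' (m+1) (s.length - m - 1)).filter (fun i => i ∉ Δ₂)).filterMap
        (fun i => s[i]?)) := by
    rw [hsm, List.range'_succ, List.filter_cons_of_pos (by simp [hm2]),
      List.filterMap_cons]
    simp [List.getElem?_eq_getElem hmn]
  by_cases hm' : m + t₀ < s.length
  · -- LHS starts with s[m + t₀]
    have hsplit : List.range' m (s.length - m) =
        List.range' m t₀ ++ List.range' (m + t₀) (s.length - m - t₀) := by
      rw [List.range'_append_1]
      congr 1; omega
    have hnil : (List.range' m t₀).filter (fun i => i ∉ Δ₁) = [] := by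
      rw [List.filter_eq_nil_iff]
      intro a ha
      simp only [List.mem_range'_1] at ha
      have := hbelow (a - m) (by omega)
      simp only [decide_eq_true_eq, not_not]
      have : m + (a - m) = a := by omega
      rw [← this]; exact hbelow (a - m) (by omega)
    have hsm' : s.length - m - t₀ = (s.length - m - t₀ - 1) + 1 := by omega
    have hT1 : ((List.range' m (s.length - m)).filter (fun i => i ∉ Δ₁)).filterMap
        (fun i => s[i]?) = s[m + t₀] ::
        (((List.range' (m + t₀ + 1) (s.length - m - t₀ - 1)).filter (fun i => i ∉ Δ₁)).filterMap
          (fun i => s[i]?)) := by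
      rw [hsplit, List.filter_append, hnil, List.nil_append, hsm', List.range'_succ,
        List.filter_cons_of_pos (by simp [ht₀]), List.filterMap_cons]
      simp [List.getElem?_eq_getElem hm']
    rw [hT1, hT2] at heqT
    have hval : s[m + t₀] = s[m] := by injection heqT
    apply hs m (m + t₀) (by omega) (by omega) (by omega)
    rw [window_one s hmn, window_one s hm', hval]
  · -- LHS is empty
    have hnil : (List.range' m (s.length - m)).filter (fun i => i ∉ Δ₁) = [] := by
      rw [List.filter_eq_nil_iff]
      intro a ha
      simp only [List.mem_range'_1] at ha
      simp only [decide_eq_true_eq, not_not]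
      have h1 : m + (a - m) = a := by omega
      rw [← h1]; exact hbelow (a - m) (by omega)
    rw [hnil, hT2] at heqT
    simp at heqT

theorem stmt14 {A : Type*} (b : ℕ) (hb : 2 ≤ b) (s : List A) (hs : IsCDB s b 1)
    (Δ₁ Δ₂ : Finset ℕ)
    (h1 : Δ₁ ⊆ Finset.range s.length) (h2 : Δ₂ ⊆ Finset.range s.length)
    -- neither set contains a run of b consecutive positions
    (hr1 : ¬ ∃ j : ℕ, ∀ t : ℕ, t < b → j + t ∈ Δ₁)
    (hr2 : ¬ ∃ j : ℕ, ∀ t : ℕ, t < b → j + t ∈ Δ₂)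
    (heq : erasePos s Δ₁ = erasePos s Δ₂) :
    Δ₁ = Δ₂ := by
  by_contra hne
  have hex : ∃ m, ¬ ((m ∈ Δ₁) ↔ (m ∈ Δ₂)) := by
    by_contra hc
    push_neg at hc
    exact hne (Finset.ext fun a => (hc a))
  classical
  set m := Nat.find hex with hmdef
  have hm : ¬ ((m ∈ Δ₁) ↔ (m ∈ Δ₂)) := Nat.find_spec hex
  have hmin : ∀ i < m, (i ∈ Δ₁ ↔ i ∈ Δ₂) := fun i hi => not_not.mp (Nat.find_min hex hi)
  by_cases hmem : m ∈ Δ₁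
  · have hm2 : m ∉ Δ₂ := fun h => hm ⟨fun _ => h, fun _ => hmem⟩
    exact key b s hs Δ₁ Δ₂ h1 hr1 heq m hmem hm2 hmin
  · have hm2 : m ∈ Δ₂ := by tauto
    exact key b s hs Δ₂ Δ₁ h2 hr2 heq.symm m hm2 hmem (fun i hi => (hmin i hi).symm)
end
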